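/- Let (d_k) satisfy d_{k+1} = b_{k+1} d_k + a_{k+1} d_{k-1} with positive integers a_k ≤ b_k + 1 and b_k ≥ 1, and suppose n_{k+1} d_k > d_{k+1} for all k (where n_{k+1} ≥ b_{k+1} + 2). Then the set S_k = { Σ_{i=k}^{r} p_i d_i : r > k, 0 ≤ p_i ≤ n_{i+1}+1 } is syndetic in ℕ: every interval of length d_k contains an element of S_k. -/
import Mathlib


/-- Positive integer sequences with `d_{k+1} = b_{k+1} d_k + a_{k+1} d_{k-1}`
(written with `D k = d_{k-1}`, so `d_k = D (k+1)`), with `a_k ≤ b_k + 1`,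
`b_k ≥ 1`, `n_{k+1} ≥ b_{k+1} + 2` and `n_{k+1} d_k > d_{k+1}`.  Then
`S_k = { Σ_{i=k}^r p_i d_i : r > k, 0 ≤ p_i ≤ n_{i+1}+1 }` is syndetic:
every interval of length `d_k` contains an element of `S_k`. -/
theorem greedy_sums_syndetic (a b n D : ℕ → ℕ)
    (ha : ∀ k, 0 < a k) (hb : ∀ k, 1 ≤ b k) (hab : ∀ k, a k ≤ b k + 1)
    (hD0 : 0 < D 0) (hD1 : 0 < D 1)
    (hrec : ∀ k, D (k + 2) = b (k + 1) * D (k + 1) + a (k + 1) * D k)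
    (hn : ∀ k, b (k + 1) + 2 ≤ n (k + 1))
    (hnd : ∀ k, D (k + 2) < n (k + 1) * D (k + 1))
    (k : ℕ) :
    ∀ M : ℕ, ∃ s : ℕ,
      (∃ r : ℕ, k < r ∧ ∃ p : ℕ → ℕ,
        (∀ i, k ≤ i → i ≤ r → p i ≤ n (i + 1) + 1) ∧
        s = ∑ i ∈ Finset.Icc k r, p i * D (i + 1)) ∧
      M ≤ s ∧ s < M + D (k + 1) := by
  intro M
  -- positivity of D
  have Dpos : ∀ i, 0 < D i := by
    intro i
    induction i using Nat.twoStepInduction with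
    | zero => exact hD0
    | one => exact hD1
    | more i h1 h2 =>
      rw [hrec i]
      have := Nat.mul_pos (ha (i + 1)) h1
      omega
  have npos : ∀ i, 0 < n (i + 1) := fun i => by have := hn i; omega
  -- lower bound on D
  have Dlb : ∀ i, i ≤ D i := by
    intro i
    induction i using Nat.twoStepInduction with
    | zero => exact Nat.zero_le _
    | one => exact hD1
    | more i h1 h2 =>
      rw [hrec i]
      have h3 : D (i + 1) ≤ b (i + 1) * D (i + 1) :=
        Nat.le_mul_of_pos_left _ (hb (i + 1))
      have h4 : D i ≤ a (i + 1) * D i := Nat.le_mul_of_pos_left _ (ha (i + 1))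
      have h5 : 0 < D i := Dpos i
      omega
  -- greedy representation lemma
  have key : ∀ m : ℕ, ∀ M : ℕ, M < D (k + m + 2) →
      ∃ p : ℕ → ℕ, (∀ i, p i < n (i + 1)) ∧
        (∑ i ∈ Finset.Icc k (k + m), p i * D (i + 1)) ≤ M ∧
        M < (∑ i ∈ Finset.Icc k (k + m), p i * D (i + 1)) + D (k + 1) := by
    intro m
    induction m with
    | zero =>
      intro M hM
      refine ⟨Function.update (fun _ => 0) k (M / D (k + 1)), ?_, ?_⟩
      · intro i
        by_cases h : i = k
        · rw [h, Function.update_self, Nat.div_lt_iff_lt_mul (Dpos (k + 1))]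
          calc M < D (k + 0 + 2) := hM
            _ < n (k + 1) * D (k + 1) := by simpa using hnd k
        · rw [Function.update_of_ne h]
          exact npos i
      · have hs : (∑ i ∈ Finset.Icc k (k + 0),
            (Function.update (fun _ => 0) k (M / D (k + 1))) i * D (i + 1))
            = M / D (k + 1) * D (k + 1) := by
          simp [Finset.Icc_self]
        rw [hs]
        have h1 := Nat.div_add_mod M (D (k + 1))
        have h2 : M % D (k + 1) < D (k + 1) := Nat.mod_lt M (Dpos (k + 1))
        have h3 : D (k + 1) * (M / D (k + 1)) = M / D (k + 1) * D (k + 1) :=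
          Nat.mul_comm _ _
        omega
    | succ m ih =>
      intro M hM
      set Dt := D (k + m + 2) with hDt
      have hDtpos : 0 < Dt := Dpos _
      set q := M / Dt with hq
      set M' := M % Dt with hM'
      have hM'lt : M' < Dt := Nat.mod_lt M hDtpos
      obtain ⟨p, hp, hle, hlt⟩ := ih M' hM'lt
      have hqlt : q < n (k + m + 2) := by
        rw [hq, Nat.div_lt_iff_lt_mul hDtpos]
        calc M < D (k + (m + 1) + 2) := hM
          _ = D ((k + m + 1) + 2) := by ring_nf
          _ < n (k + m + 2) * Dt := by
              have := hnd (k + m + 1)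
              simpa [hDt, Nat.add_assoc] using this
      refine ⟨Function.update p (k + m + 1) q, ?_, ?_⟩
      · intro i
        by_cases h : i = k + m + 1
        · rw [h, Function.update_self]
          simpa [Nat.add_assoc] using hqlt
        · rw [Function.update_of_ne h]
          exact hp i
      · have h3 : (∑ i ∈ Finset.Icc k (k + m),
            (Function.update p (k + m + 1) q) i * D (i + 1))
            = ∑ i ∈ Finset.Icc k (k + m), p i * D (i + 1) := by
          apply Finset.sum_congr rfl
          intro i hi
          rw [Finset.mem_Icc] at hi
          rw [Function.update_of_ne (by omega)]
        have hsplit : (∑ i ∈ Finset.Icc k (k + (m + 1)),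
            (Function.update p (k + m + 1) q) i * D (i + 1))
            = (∑ i ∈ Finset.Icc k (k + m), p i * D (i + 1)) + q * Dt := by
          have h1 : k + (m + 1) = (k + m) + 1 := by ring
          rw [h1, Finset.sum_Icc_succ_top (by omega : k ≤ k + m + 1), h3,
            Function.update_self]
        rw [hsplit]
        have hdm : Dt * q + M' = M := Nat.div_add_mod M Dt
        have hc : Dt * q = q * Dt := Nat.mul_comm _ _
        constructor
        · omega
        · omega
  -- main argument
  set r := max (k + 1) M with hr
  have hkr : k + 1 ≤ r := le_max_left _ _
  have hMr : M ≤ r := le_max_right _ _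
  obtain ⟨m, hm⟩ : ∃ m, r = k + m := ⟨r - k, by omega⟩
  have hMd : M < D (k + m + 2) := by
    have := Dlb (k + m + 2)
    omega
  obtain ⟨p, hp, hle, hlt⟩ := key m M hMd
  set s0 := ∑ i ∈ Finset.Icc k (k + m), p i * D (i + 1) with hs0
  by_cases hM0 : s0 = M
  · refine ⟨M, ⟨r, by omega, p, ?_, ?_⟩, le_refl M, by have := Dpos (k + 1); omega⟩
    · intro i _ _
      have := hp i
      omega
    · rw [hm, ← hs0, hM0]
  · have hslt : s0 < M := lt_of_le_of_ne hle hM0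
    refine ⟨s0 + D (k + 1), ⟨r, by omega, Function.update p k (p k + 1), ?_, ?_⟩,
      by omega, by omega⟩
    · intro i _ _
      by_cases h : i = k
      · rw [h, Function.update_self]
        have := hp k
        omega
      · rw [Function.update_of_ne h]
        have := hp i
        omega
    · rw [hm]
      have hcong : ∀ i ∈ Finset.Icc k (k + m),
          (Function.update p k (p k + 1)) i * D (i + 1)
            = p i * D (i + 1) + (if i = k then D (k + 1) else 0) := by
        intro i _
        by_cases h : i = k
        · rw [h, Function.update_self, if_pos rfl]
          ring
        · rw [Function.update_of_ne h, if_neg h]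
          ring
      rw [Finset.sum_congr rfl hcong, Finset.sum_add_distrib,
        Finset.sum_ite_eq' (Finset.Icc k (k + m)) k (fun _ => D (k + 1)),
        if_pos (by rw [Finset.mem_Icc]; omega)]
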